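/- Let C₁, C₂ be chain complexes over F₂ with chain maps ι₁, Φ₁, Ψ₁ on C₁ and ι₂, Φ₂, Ψ₂ on C₂, such that Ψ₁² ≃ 0, Φ₂² ≃ 0, ι₁Ψ₁ ≃ Φ₁ι₁, ι₂Φ₂ ≃ Ψ₂ι₂, Φ₁ι₁Ψ₁ ≃ Ψ₁Φ₁ι₁ and similar commutation relations hold up to homotopy. Set F = id⊗id + Ψ₁⊗Φ₂, ι₁×₁ι₂ = (id⊗id + Φ₁⊗Ψ₂)(ι₁⊗ι₂), and ι₁×₂ι₂ = (id⊗id + Ψ₁⊗Φ₂)(ι₁⊗ι₂). Then F∘(ι₁×₁ι₂) ≃ (ι₁×₂ι₂)∘F and F∘(ι₁×₂ι₂) ≃ (ι₁×₁ι₂)∘F, where ≃ denotes chain homotopy of maps on C₁⊗C₂. -/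
import Mathlib


open TensorProduct

noncomputable section

abbrev F2 : Type := ZMod 2

/-- Chain homotopy (over `F₂`) for maps between two chain complexes:
`f ≃ g` iff `f + g = d₂ ∘ H + H ∘ d₁` for some `F₂`-linear `H`. -/
def Htp2 {C C' : Type} [AddCommGroup C] [Module F2 C]
    [AddCommGroup C'] [Module F2 C']
    (d : C →ₗ[F2] C) (d' : C' →ₗ[F2] C') (f g : C →ₗ[F2] C') : Prop :=
  ∃ H : C →ₗ[F2] C', f + g = d' ∘ₗ H + H ∘ₗ d

/-- Chain homotopy of endomorphisms of a single complex. -/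
def Htp {C : Type} [AddCommGroup C] [Module F2 C]
    (d f g : C →ₗ[F2] C) : Prop :=
  Htp2 d d f g

/-- `f ⊗ id + id ⊗ g` on the tensor product of two complexes over `F₂`; applied
to the differentials it is the tensor-product differential. -/
def tD {C₁ C₂ : Type} [AddCommGroup C₁] [Module F2 C₁]
    [AddCommGroup C₂] [Module F2 C₂]
    (f : C₁ →ₗ[F2] C₁) (g : C₂ →ₗ[F2] C₂) :
    C₁ ⊗[F2] C₂ →ₗ[F2] C₁ ⊗[F2] C₂ :=
  TensorProduct.map f LinearMap.id + TensorProduct.map LinearMap.id g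

lemma addself {M : Type*} [AddCommGroup M] [Module F2 M] (x : M) : x + x = 0 := by
  rw [← two_smul F2 x, show (2:F2) = 0 from rfl, zero_smul]

section helpers
variable {C C' C'' C₀ : Type} [AddCommGroup C] [Module F2 C] [AddCommGroup C'] [Module F2 C']
  [AddCommGroup C''] [Module F2 C''] [AddCommGroup C₀] [Module F2 C₀]
  {d : C →ₗ[F2] C} {d' : C' →ₗ[F2] C'} {d'' : C'' →ₗ[F2] C''} {d₀ : C₀ →ₗ[F2] C₀}

lemma htp2_congr {f g f' g' : C →ₗ[F2] C'} (h : f + g = f' + g')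
    (hfg : Htp2 d d' f g) : Htp2 d d' f' g' := by
  obtain ⟨H, hH⟩ := hfg; exact ⟨H, by rw [← h, hH]⟩

lemma htp2_refl (f : C →ₗ[F2] C') : Htp2 d d' f f :=
  ⟨0, by simp [addself]⟩

lemma htp2_symm {f g : C →ₗ[F2] C'} (h : Htp2 d d' f g) : Htp2 d d' g f :=
  htp2_congr (add_comm f g) h

lemma htp2_add {f g f' g' : C →ₗ[F2] C'} (h : Htp2 d d' f g) (h' : Htp2 d d' f' g') :
    Htp2 d d' (f + f') (g + g') := by
  obtain ⟨H, hH⟩ := h; obtain ⟨H', hH'⟩ := h'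
  refine ⟨H + H', ?_⟩
  rw [show f + f' + (g + g') = (f + g) + (f' + g') by abel, hH, hH',
    LinearMap.comp_add, LinearMap.add_comp]
  abel

lemma htp2_trans {f g h : C →ₗ[F2] C'} (h1 : Htp2 d d' f g) (h2 : Htp2 d d' g h) :
    Htp2 d d' f h := by
  have := htp2_add h1 h2
  exact htp2_congr (by rw [show f + g + (g + h) = f + (g + g) + h by abel, addself, add_zero]) this

lemma htp2_comp_left {f g : C →ₗ[F2] C'} (a : C' →ₗ[F2] C'') (ha : d'' ∘ₗ a = a ∘ₗ d')
    (h : Htp2 d d' f g) : Htp2 d d'' (a ∘ₗ f) (a ∘ₗ g) := by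
  obtain ⟨H, hH⟩ := h
  refine ⟨a ∘ₗ H, ?_⟩
  rw [← LinearMap.comp_add, hH, LinearMap.comp_add]
  ext x
  simp only [LinearMap.add_apply, LinearMap.comp_apply]
  rw [← LinearMap.comp_apply d'' a, ha]
  simp

lemma htp2_comp_right {f g : C →ₗ[F2] C'} (b : C₀ →ₗ[F2] C) (hb : d ∘ₗ b = b ∘ₗ d₀)
    (h : Htp2 d d' f g) : Htp2 d₀ d' (f ∘ₗ b) (g ∘ₗ b) := by
  obtain ⟨H, hH⟩ := h
  refine ⟨H ∘ₗ b, ?_⟩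
  rw [← LinearMap.add_comp, hH, LinearMap.add_comp]
  ext x
  simp only [LinearMap.add_apply, LinearMap.comp_apply]
  rw [← LinearMap.comp_apply d b, hb]
  simp

lemma comm_comp {a b : C →ₗ[F2] C} (ha : d ∘ₗ a = a ∘ₗ d) (hb : d ∘ₗ b = b ∘ₗ d) :
    d ∘ₗ (a ∘ₗ b) = (a ∘ₗ b) ∘ₗ d := by
  rw [← LinearMap.comp_assoc, ha, LinearMap.comp_assoc, hb, LinearMap.comp_assoc]

end helpers

section tensor
variable {C₁ C₂ : Type} [AddCommGroup C₁] [Module F2 C₁] [AddCommGroup C₂] [Module F2 C₂]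
  {d₁ : C₁ →ₗ[F2] C₁} {d₂ : C₂ →ₗ[F2] C₂}

lemma htp_map_left {f₁ g₁ : C₁ →ₗ[F2] C₁} (h : Htp d₁ f₁ g₁)
    (f₂ : C₂ →ₗ[F2] C₂) (hf₂ : d₂ ∘ₗ f₂ = f₂ ∘ₗ d₂) :
    Htp (tD d₁ d₂) (TensorProduct.map f₁ f₂) (TensorProduct.map g₁ f₂) := by
  obtain ⟨H, hH⟩ := h
  refine ⟨TensorProduct.map H f₂, ?_⟩
  have e1 : tD d₁ d₂ ∘ₗ TensorProduct.map H f₂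
      = TensorProduct.map (d₁ ∘ₗ H) f₂ + TensorProduct.map H (d₂ ∘ₗ f₂) := by
    simp only [tD, LinearMap.add_comp, ← TensorProduct.map_comp, LinearMap.id_comp,
      LinearMap.comp_id]
  have e2 : TensorProduct.map H f₂ ∘ₗ tD d₁ d₂
      = TensorProduct.map (H ∘ₗ d₁) f₂ + TensorProduct.map H (f₂ ∘ₗ d₂) := by
    simp only [tD, LinearMap.comp_add, ← TensorProduct.map_comp, LinearMap.id_comp,
      LinearMap.comp_id]
  rw [e1, e2, ← TensorProduct.map_add_left, hH, TensorProduct.map_add_left, hf₂]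
  abel_nf
  rw [show ∀ x : C₁ ⊗[F2] C₂ →ₗ[F2] C₁ ⊗[F2] C₂, (2:ℤ) • x = x + x from fun x => two_zsmul x,
    addself, add_zero]

lemma htp_map_right (f₁ : C₁ →ₗ[F2] C₁) (hf₁ : d₁ ∘ₗ f₁ = f₁ ∘ₗ d₁)
    {f₂ g₂ : C₂ →ₗ[F2] C₂} (h : Htp d₂ f₂ g₂) :
    Htp (tD d₁ d₂) (TensorProduct.map f₁ f₂) (TensorProduct.map f₁ g₂) := by
  obtain ⟨H, hH⟩ := h
  refine ⟨TensorProduct.map f₁ H, ?_⟩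
  have e1 : tD d₁ d₂ ∘ₗ TensorProduct.map f₁ H
      = TensorProduct.map (d₁ ∘ₗ f₁) H + TensorProduct.map f₁ (d₂ ∘ₗ H) := by
    simp only [tD, LinearMap.add_comp, ← TensorProduct.map_comp, LinearMap.id_comp,
      LinearMap.comp_id]
  have e2 : TensorProduct.map f₁ H ∘ₗ tD d₁ d₂
      = TensorProduct.map (f₁ ∘ₗ d₁) H + TensorProduct.map f₁ (H ∘ₗ d₂) := by
    simp only [tD, LinearMap.comp_add, ← TensorProduct.map_comp, LinearMap.id_comp,
      LinearMap.comp_id]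
  rw [e1, e2, ← TensorProduct.map_add_right, hH, TensorProduct.map_add_right, hf₁]
  abel_nf
  rw [show ∀ x : C₁ ⊗[F2] C₂ →ₗ[F2] C₁ ⊗[F2] C₂, (2:ℤ) • x = x + x from fun x => two_zsmul x,
    addself, add_zero]

end tensor

/-- with `F = id⊗id + Ψ₁⊗Φ₂`, `ι₁×₁ι₂ = (id + Φ₁⊗Ψ₂)(ι₁⊗ι₂)` and
`ι₁×₂ι₂ = (id + Ψ₁⊗Φ₂)(ι₁⊗ι₂)`, one has `F∘(ι₁×₁ι₂) ≃ (ι₁×₂ι₂)∘F` and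
`F∘(ι₁×₂ι₂) ≃ (ι₁×₁ι₂)∘F`, given `Ψ₁² ≃ 0`, `Φ₂² ≃ 0`, the intertwining
relations `ι₁Ψ₁ ≃ Φ₁ι₁`, `ι₂Φ₂ ≃ Ψ₂ι₂`, `ι₁Φ₁ ≃ Ψ₁ι₁`, `ι₂Ψ₂ ≃ Φ₂ι₂`, and the
commutation relations `Φ₁ι₁Ψ₁ ≃ Ψ₁Φ₁ι₁`, `Ψ₂ι₂Φ₂ ≃ Φ₂Ψ₂ι₂`. -/
theorem stmt9 {C₁ C₂ : Type} [AddCommGroup C₁] [Module F2 C₁]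
    [AddCommGroup C₂] [Module F2 C₂]
    (d₁ ι₁ Φ₁ Ψ₁ : C₁ →ₗ[F2] C₁) (d₂ ι₂ Φ₂ Ψ₂ : C₂ →ₗ[F2] C₂)
    (hd₁ : d₁ ∘ₗ d₁ = 0) (hd₂ : d₂ ∘ₗ d₂ = 0)
    (hι₁ : d₁ ∘ₗ ι₁ = ι₁ ∘ₗ d₁) (hΦ₁ : d₁ ∘ₗ Φ₁ = Φ₁ ∘ₗ d₁) (hΨ₁ : d₁ ∘ₗ Ψ₁ = Ψ₁ ∘ₗ d₁)
    (hι₂ : d₂ ∘ₗ ι₂ = ι₂ ∘ₗ d₂) (hΦ₂ : d₂ ∘ₗ Φ₂ = Φ₂ ∘ₗ d₂) (hΨ₂ : d₂ ∘ₗ Ψ₂ = Ψ₂ ∘ₗ d₂)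
    (hΨ₁2 : Htp d₁ (Ψ₁ ∘ₗ Ψ₁) 0) (hΦ₂2 : Htp d₂ (Φ₂ ∘ₗ Φ₂) 0)
    (hi₁ : Htp d₁ (ι₁ ∘ₗ Ψ₁) (Φ₁ ∘ₗ ι₁)) (hi₂ : Htp d₂ (ι₂ ∘ₗ Φ₂) (Ψ₂ ∘ₗ ι₂))
    (hi₁' : Htp d₁ (ι₁ ∘ₗ Φ₁) (Ψ₁ ∘ₗ ι₁)) (hi₂' : Htp d₂ (ι₂ ∘ₗ Ψ₂) (Φ₂ ∘ₗ ι₂))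
    (hc₁ : Htp d₁ (Φ₁ ∘ₗ ι₁ ∘ₗ Ψ₁) (Ψ₁ ∘ₗ Φ₁ ∘ₗ ι₁))
    (hc₂ : Htp d₂ (Ψ₂ ∘ₗ ι₂ ∘ₗ Φ₂) (Φ₂ ∘ₗ Ψ₂ ∘ₗ ι₂)) :
    Htp (tD d₁ d₂)
      ((LinearMap.id + TensorProduct.map Ψ₁ Φ₂) ∘ₗ
        ((LinearMap.id + TensorProduct.map Φ₁ Ψ₂) ∘ₗ TensorProduct.map ι₁ ι₂))
      (((LinearMap.id + TensorProduct.map Ψ₁ Φ₂) ∘ₗ TensorProduct.map ι₁ ι₂) ∘ₗ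
        (LinearMap.id + TensorProduct.map Ψ₁ Φ₂)) ∧
    Htp (tD d₁ d₂)
      ((LinearMap.id + TensorProduct.map Ψ₁ Φ₂) ∘ₗ
        ((LinearMap.id + TensorProduct.map Ψ₁ Φ₂) ∘ₗ TensorProduct.map ι₁ ι₂))
      (((LinearMap.id + TensorProduct.map Φ₁ Ψ₂) ∘ₗ TensorProduct.map ι₁ ι₂) ∘ₗ
        (LinearMap.id + TensorProduct.map Ψ₁ Φ₂)) := by
  -- chain-map facts for composites
  have cΨι₁ : d₁ ∘ₗ (Ψ₁ ∘ₗ ι₁) = (Ψ₁ ∘ₗ ι₁) ∘ₗ d₁ := comm_comp hΨ₁ hι₁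
  have cιΨ₁ : d₁ ∘ₗ (ι₁ ∘ₗ Ψ₁) = (ι₁ ∘ₗ Ψ₁) ∘ₗ d₁ := comm_comp hι₁ hΨ₁
  have cΨι₂ : d₂ ∘ₗ (Ψ₂ ∘ₗ ι₂) = (Ψ₂ ∘ₗ ι₂) ∘ₗ d₂ := comm_comp hΨ₂ hι₂
  have cιΦ₂ : d₂ ∘ₗ (ι₂ ∘ₗ Φ₂) = (ι₂ ∘ₗ Φ₂) ∘ₗ d₂ := comm_comp hι₂ hΦ₂
  -- P1 : Φ₁ι₁ ⊗ Ψ₂ι₂ ≃ ι₁Ψ₁ ⊗ ι₂Φ₂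
  have P1 : Htp (tD d₁ d₂) (TensorProduct.map (Φ₁ ∘ₗ ι₁) (Ψ₂ ∘ₗ ι₂))
      (TensorProduct.map (ι₁ ∘ₗ Ψ₁) (ι₂ ∘ₗ Φ₂)) :=
    htp2_trans (htp_map_left (htp2_symm hi₁) (Ψ₂ ∘ₗ ι₂) cΨι₂)
      (htp_map_right (ι₁ ∘ₗ Ψ₁) cιΨ₁ (htp2_symm hi₂))
  -- P2 : Ψ₁Φ₁ι₁ ⊗ Φ₂Ψ₂ι₂ ≃ Ψ₁ι₁Ψ₁ ⊗ Φ₂ι₂Φ₂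
  have P2 : Htp (tD d₁ d₂) (TensorProduct.map (Ψ₁ ∘ₗ Φ₁ ∘ₗ ι₁) (Φ₂ ∘ₗ Ψ₂ ∘ₗ ι₂))
      (TensorProduct.map (Ψ₁ ∘ₗ ι₁ ∘ₗ Ψ₁) (Φ₂ ∘ₗ ι₂ ∘ₗ Φ₂)) :=
    htp2_trans
      (htp_map_left (htp2_comp_left Ψ₁ hΨ₁ (htp2_symm hi₁)) (Φ₂ ∘ₗ Ψ₂ ∘ₗ ι₂)
        (comm_comp hΦ₂ cΨι₂))
      (htp_map_right (Ψ₁ ∘ₗ ι₁ ∘ₗ Ψ₁) (comm_comp hΨ₁ cιΨ₁)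
        (htp2_comp_left Φ₂ hΦ₂ (htp2_symm hi₂)))
  -- Q : Ψ₁Ψ₁ι₁ ⊗ Φ₂Φ₂ι₂ ≃ 0
  have q1 : Htp d₁ (Ψ₁ ∘ₗ Ψ₁ ∘ₗ ι₁) 0 := by
    refine htp2_congr ?_ (htp2_comp_right ι₁ hι₁ hΨ₁2)
    simp [LinearMap.comp_assoc]
  have Q : Htp (tD d₁ d₂) (TensorProduct.map (Ψ₁ ∘ₗ Ψ₁ ∘ₗ ι₁) (Φ₂ ∘ₗ Φ₂ ∘ₗ ι₂)) 0 := by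
    refine htp2_congr ?_ (htp_map_left q1 (Φ₂ ∘ₗ Φ₂ ∘ₗ ι₂) (comm_comp hΦ₂ (comm_comp hΦ₂ hι₂)))
    simp
  -- R : Φ₁ι₁Ψ₁ ⊗ Ψ₂ι₂Φ₂ ≃ 0
  have r1a : Htp d₁ (Φ₁ ∘ₗ ι₁ ∘ₗ Ψ₁) (ι₁ ∘ₗ Ψ₁ ∘ₗ Ψ₁) := by
    refine htp2_congr ?_ (htp2_comp_right Ψ₁ hΨ₁ (htp2_symm hi₁))
    simp [LinearMap.comp_assoc]
  have r1b : Htp d₁ (ι₁ ∘ₗ Ψ₁ ∘ₗ Ψ₁) 0 := by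
    refine htp2_congr ?_ (htp2_comp_left ι₁ hι₁ hΨ₁2)
    simp [LinearMap.comp_assoc]
  have r1 : Htp d₁ (Φ₁ ∘ₗ ι₁ ∘ₗ Ψ₁) 0 := htp2_trans r1a r1b
  have R : Htp (tD d₁ d₂) (TensorProduct.map (Φ₁ ∘ₗ ι₁ ∘ₗ Ψ₁) (Ψ₂ ∘ₗ ι₂ ∘ₗ Φ₂)) 0 := by
    refine htp2_congr ?_ (htp_map_left r1 (Ψ₂ ∘ₗ ι₂ ∘ₗ Φ₂) (comm_comp hΨ₂ cιΦ₂))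
    simp
  constructor
  · refine htp2_congr ?_
      (htp2_add (htp2_add (htp2_add
        (htp2_refl (TensorProduct.map ι₁ ι₂))
        (htp2_refl (TensorProduct.map Ψ₁ Φ₂ ∘ₗ TensorProduct.map ι₁ ι₂))) P1) P2)
    simp only [LinearMap.add_comp, LinearMap.comp_add, LinearMap.id_comp, LinearMap.comp_id,
      TensorProduct.map_comp, LinearMap.comp_assoc]
    abel
  · refine htp2_congr ?_
      (htp2_add (htp2_add (htp2_add (htp2_add
        (htp2_refl (TensorProduct.map ι₁ ι₂))
        (htp2_refl (TensorProduct.map Ψ₁ Φ₂ ∘ₗ TensorProduct.map ι₁ ι₂))) Q) P1) R)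
    simp only [LinearMap.add_comp, LinearMap.comp_add, LinearMap.id_comp, LinearMap.comp_id,
      TensorProduct.map_comp, LinearMap.comp_assoc]
    abel

end
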